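/- Let φ > 0, L > 0, δ ≥ 0, k₂ > 0, T > 0. Let x_i, v_i, x_j, v_j : [0, T] → ℝ be differentiable with x_i'(t) = v_i(t), x_j'(t) = v_j(t), and v_i'(t) = u_i(t) for some function u_i. If x_j(0) − x_i(0) − (φ·x_i(0)/L)·v_i(0) − δ ≥ 0 and for all t ∈ [0, T]: v_j(t) − v_i(t) − (φ/L)·v_i(t)² − (φ·x_i(t)/L)·u_i(t) + k₂·(x_j(t) − x_i(t) − (φ·x_i(t)/L)·v_i(t) − δ) ≥ 0, then x_j(t) − x_i(t) − (φ·x_i(t)/L)·v_i(t) − δ ≥ 0 for all t ∈ [0, T]. -/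

import Mathlib

/-- Correctness of the CBF constraint for safe merging: if the safe-merging
CBF condition L_f b₂ + (L_g b₂)·u_i + k₂·b₂ ≥ 0 holds along the trajectory
and b₂(0) ≥ 0, then b₂(t) ≥ 0 for all t ∈ [0,T]. -/
theorem stmt6 (φ L δ k₂ T : ℝ) (hφ : 0 < φ) (hL : 0 < L) (hδ : 0 ≤ δ) (hk : 0 < k₂) (hT : 0 < T)
    (xi vi xj vj ui : ℝ → ℝ)
    (hxi : ∀ t ∈ Set.Icc (0:ℝ) T, HasDerivAt xi (vi t) t)
    (hxj : ∀ t ∈ Set.Icc (0:ℝ) T, HasDerivAt xj (vj t) t)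
    (hvi : ∀ t ∈ Set.Icc (0:ℝ) T, HasDerivAt vi (ui t) t)
    (hinit : 0 ≤ xj 0 - xi 0 - (φ * xi 0 / L) * vi 0 - δ)
    (hcbf : ∀ t ∈ Set.Icc (0:ℝ) T,
      0 ≤ vj t - vi t - (φ / L) * (vi t)^2 - (φ * xi t / L) * ui t
          + k₂ * (xj t - xi t - (φ * xi t / L) * vi t - δ)) :
    ∀ t ∈ Set.Icc (0:ℝ) T, 0 ≤ xj t - xi t - (φ * xi t / L) * vi t - δ := by
  set b : ℝ → ℝ := fun t => xj t - xi t - (φ * xi t / L) * vi t - δ with hbdef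
  have hb : ∀ t ∈ Set.Icc (0:ℝ) T, HasDerivAt b
      (vj t - vi t - (φ / L) * (vi t)^2 - (φ * xi t / L) * ui t) t := by
    intro t ht
    have h1 : HasDerivAt (fun s => (φ * xi s / L) * vi s)
        ((φ * vi t / L) * vi t + (φ * xi t / L) * ui t) t := by
      have hx : HasDerivAt (fun s => φ * xi s / L) (φ * vi t / L) t := by
        simpa [mul_div_assoc] using (((hxi t ht).const_mul φ).div_const L)
      exact hx.mul (hvi t ht)
    have := (((hxj t ht).sub (hxi t ht)).sub h1).sub_const δ
    refine this.congr_deriv ?_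
    have hL' : (L:ℝ) ≠ 0 := ne_of_gt hL
    field_simp
    ring
  set g : ℝ → ℝ := fun t => b t * Real.exp (k₂ * t) with hgdef
  have hg : ∀ t ∈ Set.Icc (0:ℝ) T, HasDerivAt g
      ((vj t - vi t - (φ / L) * (vi t)^2 - (φ * xi t / L) * ui t + k₂ * b t)
        * Real.exp (k₂ * t)) t := by
    intro t ht
    have he : HasDerivAt (fun s => Real.exp (k₂ * s)) (k₂ * Real.exp (k₂ * t)) t := by
      simpa [mul_comm] using (((hasDerivAt_id t).const_mul k₂).exp)
    have := (hb t ht).mul he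
    refine this.congr_deriv ?_
    ring
  have hmono : MonotoneOn g (Set.Icc 0 T) := by
    apply monotoneOn_of_deriv_nonneg (convex_Icc 0 T)
    · exact fun t ht => ((hg t ht).continuousAt).continuousWithinAt
    · intro t ht
      rw [interior_Icc] at ht
      exact ((hg t (Set.mem_Icc_of_Ioo ht)).differentiableAt).differentiableWithinAt
    · intro t ht
      rw [interior_Icc] at ht
      rw [(hg t (Set.mem_Icc_of_Ioo ht)).deriv]
      have := hcbf t (Set.mem_Icc_of_Ioo ht)
      positivity
  intro t ht
  have h0 : (0:ℝ) ∈ Set.Icc (0:ℝ) T := Set.left_mem_Icc.mpr hT.le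
  have := hmono h0 ht ht.1
  have hg0 : 0 ≤ g 0 := by
    simp only [hgdef]
    positivity
  have hgt : 0 ≤ b t * Real.exp (k₂ * t) := le_trans hg0 this
  have hexp : 0 < Real.exp (k₂ * t) := Real.exp_pos _
  have hbt : 0 ≤ b t := nonneg_of_mul_nonneg_right (by linarith [mul_comm (b t) (Real.exp (k₂ * t))]) hexp
  simpa [hbdef] using hbt
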